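/- Let 0 < τ < 1/2 and let T : ℝ → ℝ satisfy T(g) + τ·f(T(g)) = g for every g ∈ ℝ. Then T is twice differentiable and for every g ∈ ℝ one has T''(g) = −6·τ·T(g)·(T'(g))³; consequently |T''(g)| ≤ 96·τ·|g|. (This is the scalar analogue of the second-derivative formula D²T_τ(g) = −τ·(DT_τ(g))²·f''(T_τ(g))·DT_τ(g) and the bound (eq:D2T) ‖D²T_τ(g)‖ ≤ cτ(1 + ‖g‖).) -/

import Mathlib

/-- The Allen–Cahn nonlinearity `f(x) = x³ − x`. -/
noncomputable def acF (x : ℝ) : ℝ := x ^ 3 - x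

/-- Scalar analogue of the second-derivative formula for `D²T_τ` and the bound (eq:D2T):
if `0 < τ < 1/2` and `T(g) + τ f(T(g)) = g` for all `g`, then `T` is twice differentiable
with `T''(g) = −6τ T(g) (T'(g))³` and `|T''(g)| ≤ 96 τ |g|`. -/
theorem stmt13 (τ : ℝ) (hτ0 : 0 < τ) (hτ : τ < 1 / 2) (T : ℝ → ℝ)
    (hT : ∀ g : ℝ, T g + τ * acF (T g) = g) :
    Differentiable ℝ T ∧ Differentiable ℝ (deriv T) ∧
      ∀ g : ℝ, deriv (deriv T) g = -6 * τ * T g * (deriv T g) ^ 3 ∧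
        |deriv (deriv T) g| ≤ 96 * τ * |g| := by
  set φ : ℝ → ℝ := fun v => v + τ * (v ^ 3 - v) with hφdef
  have hφT : ∀ g, φ (T g) = g := by
    intro g; simpa [acF, hφdef] using hT g
  have hφd : ∀ v : ℝ, HasDerivAt φ (1 - τ + 3 * τ * v ^ 2) v := by
    intro v
    have h1 : HasDerivAt (fun v : ℝ => v + τ * (v ^ 3 - v))
        (1 + τ * (3 * v ^ 2 - 1)) v := by
      have := ((hasDerivAt_pow 3 v).sub (hasDerivAt_id v)).const_mul τ
      have h3 := (hasDerivAt_id v).add this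
      simp at h3
      exact h3
    convert h1 using 1; ring
  have hφmono : StrictMono φ := by
    apply strictMono_of_deriv_pos
    intro x
    rw [(hφd x).deriv]
    nlinarith [sq_nonneg x]
  have hTmono : Monotone T := by
    intro a b hab
    by_contra h
    push_neg at h
    have := hφmono h
    rw [hφT, hφT] at this
    linarith
  have hTsurj : Function.Surjective T := by
    intro v
    refine ⟨φ v, hφmono.injective ?_⟩
    rw [hφT]
  have hTcont : Continuous T := hTmono.continuous_of_surjective hTsurj
  -- the derivative
  set h : ℝ → ℝ := fun g => 1 - τ + 3 * τ * (T g) ^ 2 with hhdef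
  have hhpos : ∀ g, 0 < h g := by
    intro g
    have : 0 ≤ 3 * τ * (T g) ^ 2 := by positivity
    simp only [hhdef]; linarith
  have hT' : ∀ g, HasDerivAt T (h g)⁻¹ g := by
    intro g
    exact HasDerivAt.of_local_left_inverse hTcont.continuousAt (hφd (T g))
      (ne_of_gt (hhpos g)) (Filter.Eventually.of_forall hφT)
  have hTdiff : Differentiable ℝ T := fun g => (hT' g).differentiableAt
  have hderivT : deriv T = fun g => (h g)⁻¹ := funext fun g => (hT' g).deriv
  have hh' : ∀ g, HasDerivAt h (6 * τ * T g * (h g)⁻¹) g := by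
    intro g
    have h2 := (hasDerivAt_const g (1 - τ)).add (((hT' g).pow 2).const_mul (3 * τ))
    refine h2.congr_deriv ?_
    push_cast
    ring
  have hD' : ∀ g, HasDerivAt (deriv T) (-6 * τ * T g * ((h g)⁻¹) ^ 3) g := by
    intro g
    rw [hderivT]
    have h2 := (hh' g).inv (ne_of_gt (hhpos g))
    refine h2.congr_deriv ?_
    field_simp
  have hDdiff : Differentiable ℝ (deriv T) := fun g => (hD' g).differentiableAt
  refine ⟨hTdiff, hDdiff, fun g => ?_⟩
  have hderiv2 : deriv (deriv T) g = -6 * τ * T g * (deriv T g) ^ 3 := by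
    rw [(hD' g).deriv, hderivT]
  refine ⟨hderiv2, ?_⟩
  rw [hderiv2]
  -- bounds
  have hg : g = T g * (1 - τ + τ * (T g) ^ 2) := by
    have h0 := hT g
    simp only [acF] at h0
    linear_combination -h0
  have h1 : (1 : ℝ) / 2 ≤ 1 - τ + τ * (T g) ^ 2 := by nlinarith [sq_nonneg (T g)]
  have habsg : |g| = |T g| * (1 - τ + τ * (T g) ^ 2) := by
    conv_lhs => rw [hg]
    rw [abs_mul, abs_of_pos (by linarith : (0:ℝ) < 1 - τ + τ * (T g) ^ 2)]
  have hTg : |T g| ≤ 2 * |g| := by nlinarith [abs_nonneg (T g)]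
  have hTd : |deriv T g| ≤ 2 := by
    rw [hderivT]
    have h2 : (1:ℝ)/2 ≤ h g := by
      have : 0 ≤ 3 * τ * (T g) ^ 2 := by positivity
      simp only [hhdef]; linarith
    rw [abs_of_pos (inv_pos.2 (hhpos g))]
    rw [inv_le_comm₀ (hhpos g) (by norm_num)]
    linarith
  have habs : |-6 * τ * T g * (deriv T g) ^ 3| = 6 * τ * |T g| * |deriv T g| ^ 3 := by
    rw [abs_mul, abs_mul, abs_pow, abs_mul]
    norm_num [abs_of_pos hτ0]
  rw [habs]
  have hb3 : |deriv T g| ^ 3 ≤ 8 := by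
    calc |deriv T g| ^ 3 ≤ 2 ^ 3 := pow_le_pow_left₀ (abs_nonneg _) hTd 3
      _ = 8 := by norm_num
  have s1 : 6 * τ * |T g| * |deriv T g| ^ 3 ≤ 6 * τ * |T g| * 8 :=
    mul_le_mul_of_nonneg_left hb3 (by positivity)
  have s2 : 6 * τ * |T g| * 8 ≤ 6 * τ * (2 * |g|) * 8 := by
    have := mul_le_mul_of_nonneg_left hTg (by positivity : (0:ℝ) ≤ 6 * τ)
    nlinarith [this]
  nlinarith [s1, s2]
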